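/- For d = 20 and k = 3, the quantity N = (8/7)·Σ_{m=0}^{3} Σ_{j=0}^{3−m} sin²((2j+1)π/7)·(C(19+2m, 2m) − C(17+2m, 2m−2)) satisfies 47868.2 < N < 47868.8; in particular N is not an integer. -/

import Mathlib

open Real

set_option maxHeartbeats 1000000

lemma sin_seven_mul (θ : ℝ) : Real.sin (7 * θ) =
    7 * Real.sin θ - 56 * Real.sin θ ^ 3 + 112 * Real.sin θ ^ 5 - 64 * Real.sin θ ^ 7 := by
  have h : (7 : ℝ) * θ = θ + θ + θ + θ + θ + θ + θ := by ring
  rw [h]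
  simp only [Real.sin_add, Real.cos_add]
  linear_combination (7 * Real.sin θ + 7 * Real.sin θ * Real.cos θ ^ 2
    + 7 * Real.sin θ * Real.cos θ ^ 4 - 49 * Real.sin θ ^ 3
    - 42 * Real.sin θ ^ 3 * Real.cos θ ^ 2 + 63 * Real.sin θ ^ 5) *
    (Real.sin_sq_add_cos_sq θ)

lemma cubic_of (a : ℝ) (h0 : Real.sin (7 * a) = 0) (hs : Real.sin a ≠ 0) :
    64 * (Real.sin a ^ 2) ^ 3 - 112 * (Real.sin a ^ 2) ^ 2 + 56 * Real.sin a ^ 2 - 7 = 0 := by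
  have key : Real.sin a * (64 * (Real.sin a ^ 2) ^ 3 - 112 * (Real.sin a ^ 2) ^ 2
      + 56 * Real.sin a ^ 2 - 7) = 0 := by
    linear_combination sin_seven_mul a - h0
  rcases mul_eq_zero.mp key with h | h
  · exact absurd h hs
  · exact h

lemma cubic_k (k : ℕ) (hk1 : 0 < (k:ℝ)) (hk2 : (k:ℝ) < 7) :
    64 * (Real.sin ((k:ℝ)*π/7) ^ 2) ^ 3 - 112 * (Real.sin ((k:ℝ)*π/7) ^ 2) ^ 2
      + 56 * Real.sin ((k:ℝ)*π/7) ^ 2 - 7 = 0 := by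
  have hpi := Real.pi_pos
  have h0 : Real.sin (7 * ((k:ℝ)*π/7)) = 0 := by
    rw [show 7 * ((k:ℝ)*π/7) = (k:ℝ)*π by ring]
    exact_mod_cast Real.sin_nat_mul_pi k
  have hs : Real.sin ((k:ℝ)*π/7) ≠ 0 :=
    ne_of_gt (Real.sin_pos_of_pos_of_lt_pi (by positivity)
      (by nlinarith))
  exact cubic_of _ h0 hs

-- crude bounds
lemma u1_crude : 0 < Real.sin ((1:ℝ)*π/7) ^ 2 ∧ Real.sin ((1:ℝ)*π/7) ^ 2 < 0.2025 := by
  have hpi := Real.pi_pos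
  have hub := Real.pi_lt_d6
  have h1 : (0:ℝ) < 1*π/7 := by positivity
  have h2 : Real.sin ((1:ℝ)*π/7) < 0.45 := lt_of_lt_of_le (Real.sin_lt h1) (by nlinarith)
  have h3 : 0 < Real.sin ((1:ℝ)*π/7) :=
    Real.sin_pos_of_pos_of_lt_pi h1 (by nlinarith)
  constructor
  · positivity
  · nlinarith

lemma u2_crude : 0.949 < Real.sin ((3:ℝ)*π/7) ^ 2 ∧ Real.sin ((3:ℝ)*π/7) ^ 2 ≤ 1 := by
  have hub := Real.pi_lt_d6
  have hlb := Real.pi_gt_d6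
  have heq : Real.sin ((3:ℝ)*π/7) = Real.cos (π/14) := by
    rw [show (3:ℝ)*π/7 = π/2 - π/14 by ring, Real.sin_pi_div_two_sub]
  have hx : |π/14| ≤ 1 := by rw [abs_of_pos (by positivity)]; nlinarith
  have hb := abs_le.mp (Real.cos_bound hx)
  have hxa : |π/14| = π/14 := abs_of_pos (by positivity)
  rw [hxa] at hb
  have hx0 : (0:ℝ) < π/14 := by positivity
  have hxu : π/14 < 0.2244 := by nlinarith
  have hq2 : (π/14)^2 < 0.05036 := by nlinarith
  have hq4 : (π/14)^4 < 0.002536 := by nlinarith [sq_nonneg ((π/14)^2)]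
  have hc : 0.9746 < Real.cos (π/14) := by nlinarith [hb.1]
  constructor
  · rw [heq]; nlinarith [sq_nonneg (Real.cos (π/14) - 0.9746)]
  · exact Real.sin_sq_le_one _

lemma u3_crude : 0.55 < Real.sin ((5:ℝ)*π/7) ^ 2 ∧ Real.sin ((5:ℝ)*π/7) ^ 2 < 0.66 := by
  have hub := Real.pi_lt_d6
  have hlb := Real.pi_gt_d6
  have heq : Real.sin ((5:ℝ)*π/7) = Real.sin (2*π/7) := by
    rw [show (5:ℝ)*π/7 = π - 2*π/7 by ring, Real.sin_pi_sub]
  have hx : |2*π/7| ≤ 1 := by rw [abs_of_pos (by positivity)]; nlinarith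
  have hb := abs_le.mp (Real.sin_bound hx)
  have hxa : |2*π/7| = 2*π/7 := abs_of_pos (by positivity)
  rw [hxa] at hb
  have hxl : (0.89759:ℝ) < 2*π/7 := by nlinarith
  have hxu : 2*π/7 < 0.8976 := by nlinarith
  have hy0 : (0:ℝ) < 2*π/7 := by positivity
  have h3l : (0.72312:ℝ) < (2*π/7)^3 := by
    nlinarith [mul_pos (sub_pos.mpr hxl) (sub_pos.mpr hxl),
      mul_pos (mul_pos (sub_pos.mpr hxl) (sub_pos.mpr hxl)) (sub_pos.mpr hxl)]
  have h3u : (2*π/7)^3 < 0.72319 := by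
    nlinarith [mul_pos (sub_pos.mpr hxu) (sub_pos.mpr hxu),
      mul_pos (mul_pos (sub_pos.mpr hxu) (sub_pos.mpr hxu)) (sub_pos.mpr hxu)]
  have h2u : (2*π/7)^2 < 0.805686 := by nlinarith
  have h4u : (2*π/7)^4 < 0.6492 := by nlinarith [sq_nonneg ((2*π/7)^2)]
  have h4l : (0:ℝ) ≤ (2*π/7)^4 := by positivity
  have h1 : 0.743 < Real.sin (2*π/7) := by nlinarith [hb.1]
  have h2 : Real.sin (2*π/7) < 0.812 := by nlinarith [hb.2]
  rw [heq]
  constructor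
  · nlinarith [sq_nonneg (Real.sin (2*π/7) - 0.743)]
  · nlinarith [sq_nonneg (Real.sin (2*π/7) - 0.812), h1]

/-- For `d = 20`, `k = 3`, the quantity
`N = (8/7) Σ_{m=0}^{3} Σ_{j=0}^{3−m} sin²((2j+1)π/7) (C(19+2m,2m) − C(17+2m,2m−2))`
(with the convention that the second binomial is `0` when `m = 0`)
satisfies `47868.2 < N < 47868.8`; in particular `N` is not an integer. -/
theorem stmt_18 :
    (47868.2 : ℝ)
        < (8 / 7) * ∑ m ∈ Finset.range 4, ∑ j ∈ Finset.range (4 - m),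
            Real.sin ((2 * (j : ℝ) + 1) * π / 7) ^ 2
              * (((19 + 2 * m).choose (2 * m) : ℝ)
                - if m = 0 then 0 else ((17 + 2 * m).choose (2 * m - 2) : ℝ)) ∧
    (8 / 7) * (∑ m ∈ Finset.range 4, ∑ j ∈ Finset.range (4 - m),
            Real.sin ((2 * (j : ℝ) + 1) * π / 7) ^ 2
              * (((19 + 2 * m).choose (2 * m) : ℝ)
                - if m = 0 then 0 else ((17 + 2 * m).choose (2 * m - 2) : ℝ)))
        < 47868.8 ∧
    ¬ ∃ z : ℤ, (z : ℝ)
        = (8 / 7) * ∑ m ∈ Finset.range 4, ∑ j ∈ Finset.range (4 - m),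
            Real.sin ((2 * (j : ℝ) + 1) * π / 7) ^ 2
              * (((19 + 2 * m).choose (2 * m) : ℝ)
                - if m = 0 then 0 else ((17 + 2 * m).choose (2 * m - 2) : ℝ)) := by
  have hS : (∑ m ∈ Finset.range 4, ∑ j ∈ Finset.range (4 - m),
            Real.sin ((2 * (j : ℝ) + 1) * π / 7) ^ 2
              * (((19 + 2 * m).choose (2 * m) : ℝ)
                - if m = 0 then 0 else ((17 + 2 * m).choose (2 * m - 2) : ℝ)))
      = 177100 * Real.sin ((1:ℝ)*π/7) ^ 2 + 8855 * Real.sin ((3:ℝ)*π/7) ^ 2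
        + 210 * Real.sin ((5:ℝ)*π/7) ^ 2 := by
    have h7 : Real.sin ((2 * (3:ℝ) + 1) * π / 7) = 0 := by
      rw [show (2 * (3:ℝ) + 1) * π / 7 = π by ring, Real.sin_pi]
    simp only [Finset.sum_range_succ, Finset.sum_range_zero]
    norm_num [h7]
    ring_nf
    norm_num [show Nat.choose 25 6 = 177100 from by decide,
      show Nat.choose 23 4 = 8855 from by decide,
      show Nat.choose 21 2 = 210 from by decide]
  -- pin the three sine squares
  obtain ⟨h1l, h1u⟩ := u1_crude
  obtain ⟨h2l, h2u⟩ := u2_crude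
  obtain ⟨h3l, h3u⟩ := u3_crude
  have hc1 := cubic_k 1 (by norm_num) (by norm_num)
  have hc2 := cubic_k 3 (by norm_num) (by norm_num)
  have hc3 := cubic_k 5 (by norm_num) (by norm_num)
  push_cast at hc1 hc2 hc3
  set u1 := Real.sin ((1:ℝ)*π/7) ^ 2 with hu1
  set u2 := Real.sin ((3:ℝ)*π/7) ^ 2 with hu2
  set u3 := Real.sin ((5:ℝ)*π/7) ^ 2 with hu3
  have p1l : (0.18825505:ℝ) < u1 := by
    nlinarith [sq_nonneg (u1 - 0.18825505), sq_nonneg (u1 - 0.2025), mul_pos h1l h1l]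
  have p1u : u1 < 0.18825515 := by
    nlinarith [sq_nonneg (u1 - 0.18825515), sq_nonneg (u1 - 0.2025), mul_pos h1l h1l]
  have p2l : (0.9504843:ℝ) < u2 := by
    nlinarith [sq_nonneg (u2 - 0.9504843), sq_nonneg (u2 - 1),
      mul_pos (by linarith : (0:ℝ) < u2) (by linarith : (0:ℝ) < u2)]
  have p2u : u2 < 0.9504846 := by
    nlinarith [sq_nonneg (u2 - 0.9504846), sq_nonneg (u2 - 0.949),
      mul_pos (by linarith : (0:ℝ) < u2) (by linarith : (0:ℝ) < u2)]
  have p3l : (0.61125:ℝ) < u3 := by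
    nlinarith [sq_nonneg (u3 - 0.61125), sq_nonneg (u3 - 0.66), sq_nonneg (u3 - 0.55)]
  have p3u : u3 < 0.61128 := by
    nlinarith [sq_nonneg (u3 - 0.61128), sq_nonneg (u3 - 0.66), sq_nonneg (u3 - 0.55)]
  rw [hS]
  refine ⟨by nlinarith, by nlinarith, ?_⟩
  rintro ⟨z, hz⟩

  have hz1 : (47868:ℝ) < (z:ℝ) := by rw [hz]; nlinarith
  have hz2 : (z:ℝ) < 47869 := by rw [hz]; nlinarith
  have hz1' : (47868:ℤ) < z := by exact_mod_cast hz1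
  have hz2' : z < (47869:ℤ) := by exact_mod_cast hz2
  omega
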